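/- arXiv:2210.00408 — 2 statements merged into one kernel-verified Lean document; each statement's English description precedes it below -/
import Mathlib

section
/- For every natural number n, the number of possible positions of an n-step simple random walk on Z^4 is |P_n^4| = (1/3)n^4 + (4/3)n^3 + (8/3)n^2 + (8/3)n + 1. -/
open Finset

/-- The set of positions in `ℤ^d` reachable from the origin in exactly `n` steps,
each step being a standard unit vector or its negative. -/
def P (d n : ℕ) : Set (Fin d → ℤ) :=
  {x | ∃ f : Fin n → Fin d → ℤ,
    (∀ i, ∃ j : Fin d, f i = Pi.single j 1 ∨ f i = Pi.single j (-1)) ∧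
    x = ∑ i, f i}

noncomputable def ball (d n : ℕ) : Finset (Fin d → ℤ) :=
  (Fintype.piFinset fun _ => Finset.Icc (-(n:ℤ)) n).filter
    (fun x => ∑ i, |x i| ≤ (n:ℤ) ∧ ((n:ℤ) + ∑ i, x i) % 2 = 0)

lemma mem_ball {d n : ℕ} {x : Fin d → ℤ} :
    x ∈ ball d n ↔ ∑ i, |x i| ≤ (n:ℤ) ∧ ((n:ℤ) + ∑ i, x i) % 2 = 0 := by
  constructor
  · intro h; exact (Finset.mem_filter.1 h).2
  · intro h
    refine Finset.mem_filter.2 ⟨?_, h⟩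
    refine Fintype.mem_piFinset.2 fun i => ?_
    have h1 : |x i| ≤ ∑ j, |x j| :=
      Finset.single_le_sum (f := fun j => |x j|) (fun j _ => abs_nonneg _) (mem_univ i)
    have := abs_le.1 (h1.trans h.1)
    simp [Finset.mem_Icc]; omega

lemma card_ball_succ (d n : ℕ) :
    (ball (d+1) n).card = ∑ k ∈ Finset.Icc (-(n:ℤ)) n, (ball d (n - k.natAbs)).card := by
  rw [Finset.card_eq_sum_card_fiberwise (f := fun x => x 0) (t := Finset.Icc (-(n:ℤ)) n)]
  · refine Finset.sum_congr rfl fun k hk => ?_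
    have hk' : k.natAbs ≤ n := by
      rw [Finset.mem_Icc] at hk; omega
    refine Finset.card_bij' (fun x _ => Fin.tail x) (fun y _ => Fin.cons k y) ?_ ?_ ?_ ?_
    · intro x hx
      show Fin.tail x ∈ ball d (n - k.natAbs)
      rw [Finset.mem_filter] at hx
      obtain ⟨hx, hx0⟩ := hx
      rw [mem_ball] at hx ⊢
      have hs1 : ∑ i : Fin (d+1), |x i| = |x 0| + ∑ i : Fin d, |Fin.tail x i| := by
        rw [Fin.sum_univ_succ]; rfl
      have hs2 : ∑ i : Fin (d+1), x i = x 0 + ∑ i : Fin d, Fin.tail x i := by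
        rw [Fin.sum_univ_succ]; rfl
      have hcast : ((n - k.natAbs : ℕ) : ℤ) = (n : ℤ) - |k| := by
        rw [Int.abs_eq_natAbs]; push_cast [hk']; ring
      rw [hcast]
      obtain ⟨h1, h2⟩ := hx
      rw [hs1, hx0] at h1
      rw [hs2, hx0] at h2
      have habs : |k| = (k.natAbs : ℤ) := Int.abs_eq_natAbs k
      refine ⟨?_, ?_⟩ <;> omega
    · intro y hy
      show (Fin.cons k y : Fin (d+1) → ℤ) ∈ Finset.filter _ _
      rw [mem_ball] at hy
      rw [Finset.mem_filter, mem_ball]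
      have hcast : ((n - k.natAbs : ℕ) : ℤ) = (n : ℤ) - |k| := by
        rw [Int.abs_eq_natAbs]; push_cast [hk']; ring
      rw [hcast] at hy
      have hs1 : ∑ i : Fin (d+1), |Fin.cons k y i| = |k| + ∑ i : Fin d, |y i| := by
        rw [Fin.sum_univ_succ]; simp
      have hs2 : ∑ i : Fin (d+1), Fin.cons k y i = k + ∑ i : Fin d, y i := by
        rw [Fin.sum_univ_succ]; simp
      refine ⟨⟨?_, ?_⟩, ?_⟩
      · rw [hs1]
        have habs : |k| = (k.natAbs : ℤ) := Int.abs_eq_natAbs k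
        omega
      · rw [hs2]
        have habs : |k| = (k.natAbs : ℤ) := Int.abs_eq_natAbs k
        omega
      · simp
    · intro x hx
      show Fin.cons k (Fin.tail x) = x
      rw [Finset.mem_filter] at hx
      have h := Fin.cons_self_tail x
      rw [hx.2] at h
      exact h
    · intro y _
      simp
  · intro x hx
    rw [Finset.mem_coe, mem_ball] at hx
    have h1 : |x 0| ≤ ∑ j, |x j| :=
      Finset.single_le_sum (f := fun j => |x j|) (fun j _ => abs_nonneg _) (mem_univ 0)
    simp only [Finset.mem_coe, Finset.mem_Icc]
    have := abs_le.1 (h1.trans hx.1)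
    omega

lemma sum_abs_icc (g : ℕ → ℕ) : ∀ n : ℕ,
    ∑ k ∈ Finset.Icc (-(n:ℤ)) n, g (n - k.natAbs) = g n + 2 * ∑ j ∈ Finset.range n, g j := by
  intro n
  induction n generalizing g with
  | zero => simp
  | succ n ih =>
    have hsplit : Finset.Icc (-(n+1:ℤ)) (n+1) =
        insert (-(n+1:ℤ)) (insert ((n+1:ℤ)) (Finset.Icc (-(n:ℤ)) n)) := by
      ext k; simp [Finset.mem_Icc]; omega

    push_cast
    rw [hsplit, Finset.sum_insert, Finset.sum_insert]
    · have h1 : ∀ k ∈ Finset.Icc (-(n:ℤ)) n,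
          (g ((n+1) - k.natAbs)) = (fun m => g (m + 1)) (n - k.natAbs) := by
        intro k hk
        rw [Finset.mem_Icc] at hk
        have : k.natAbs ≤ n := by omega
        congr 1
        omega
      have hc1 : ((-(n+1:ℤ)).natAbs) = n + 1 := by omega
      have hc2 : (((n:ℤ)+1).natAbs) = n + 1 := by omega
      rw [hc1, hc2]
      rw [Finset.sum_congr rfl h1, ih (fun m => g (m + 1))]
      have := Finset.sum_range_succ' g n
      simp only [Nat.sub_self]
      omega

    · rw [Finset.mem_Icc]; omega
    · simp only [Finset.mem_insert, Finset.mem_Icc]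
      omega

noncomputable def N (d n : ℕ) : ℕ := (ball d n).card

lemma N0 (n : ℕ) : N 0 n = if n % 2 = 0 then 1 else 0 := by
  unfold N
  split_ifs with h
  · rw [Finset.card_eq_one]
    refine ⟨(fun _ => 0), ?_⟩
    ext x
    have hx : x = (fun _ => 0) := Subsingleton.elim _ _
    simp [mem_ball, hx]
    omega
  · rw [Finset.card_eq_zero]
    ext x
    simp [mem_ball]
    omega

lemma N_succ (d n : ℕ) : N (d+1) n = N d n + 2 * ∑ j ∈ Finset.range n, N d j := by
  rw [N, card_ball_succ]
  exact sum_abs_icc (N d) n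

lemma N_step (d n : ℕ) : N (d+1) (n+1) = N (d+1) n + N d (n+1) + N d n := by
  rw [N_succ, N_succ, Finset.sum_range_succ]
  ring

lemma N1 (n : ℕ) : N 1 n = n + 1 := by
  induction n with
  | zero => simp [N_succ, N0]
  | succ n ih => rw [N_step, ih, N0, N0]; split_ifs <;> omega

lemma N2 (n : ℕ) : N 2 n = (n+1)^2 := by
  induction n with
  | zero => simp [N_succ, N1, N0]
  | succ n ih => rw [N_step, ih, N1, N1]; ring

lemma N3 (n : ℕ) : 3 * N 3 n = 2*n^3 + 6*n^2 + 7*n + 3 := by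
  induction n with
  | zero => simp [N_succ, N2, N0]
  | succ n ih => rw [N_step, Nat.mul_add, Nat.mul_add, ih, N2, N2]; ring

lemma N4 (n : ℕ) : 3 * N 4 n = n^4 + 4*n^3 + 8*n^2 + 8*n + 3 := by
  induction n with
  | zero =>
    have h := N3 0
    rw [N_succ]
    simp at h ⊢
    omega
  | succ n ih => rw [N_step, Nat.mul_add, Nat.mul_add, ih, N3, N3]; ring

lemma step_mem {d n : ℕ} {y : Fin d → ℤ} (hy : y ∈ P d n) (j : Fin d) (c : ℤ)
    (hc : c = 1 ∨ c = -1) : y + Pi.single j c ∈ P d (n+1) := by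
  obtain ⟨f, hf, hsum⟩ := hy
  refine ⟨Fin.cons (Pi.single j c) f, ?_, ?_⟩
  · intro i
    refine Fin.cases ?_ ?_ i
    · exact ⟨j, by rcases hc with h | h <;> simp [h]⟩
    · intro i'
      simpa [Fin.cons_succ] using hf i'
  · rw [Fin.sum_univ_succ]
    simp only [Fin.cons_zero, Fin.cons_succ]
    rw [← hsum]
    abel

lemma P_subset_ball {d n : ℕ} {x : Fin d → ℤ} (hx : x ∈ P d n) : x ∈ ball d n := by
  obtain ⟨f, hf, rfl⟩ := hx
  rw [mem_ball]
  have habs1 : ∀ i, ∑ j', |f i j'| = 1 := by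
    intro i
    obtain ⟨j, h | h⟩ := hf i <;> rw [h] <;>
      simp [Pi.single_apply, apply_ite abs, Finset.sum_ite_eq']
  have hval : ∀ i, ∑ j', f i j' = 1 ∨ ∑ j', f i j' = -1 := by
    intro i
    obtain ⟨j, h | h⟩ := hf i <;> rw [h] <;>
      simp [Pi.single_apply, Finset.sum_ite_eq']
  constructor
  · calc ∑ j', |(∑ i, f i) j'| = ∑ j', |∑ i, f i j'| := by simp [Finset.sum_apply]
      _ ≤ ∑ j', ∑ i, |f i j'| :=
        Finset.sum_le_sum fun j _ => Finset.abs_sum_le_sum_abs _ _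
      _ = ∑ i, ∑ j', |f i j'| := Finset.sum_comm
      _ = ∑ i : Fin n, 1 := by simp [habs1]
      _ = n := by simp
  · have hdvd : (2:ℤ) ∣ ∑ i, (1 - ∑ j', f i j') :=
      Finset.dvd_sum fun i _ => by rcases hval i with h | h <;> rw [h] <;> norm_num
    have hsum : ∑ i, (1 - ∑ j', f i j') = (n : ℤ) - ∑ i, ∑ j', f i j' := by
      rw [Finset.sum_sub_distrib]
      simp
    have hcomm : ∑ j', (∑ i, f i) j' = ∑ i, ∑ j', f i j' := by
      simp [Finset.sum_apply]
      exact Finset.sum_comm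
    rw [hcomm]
    obtain ⟨t, ht⟩ := hdvd
    rw [hsum] at ht
    omega

lemma ball_subset_P {d : ℕ} (hd : 0 < d) :
    ∀ n : ℕ, ∀ x : Fin d → ℤ, x ∈ ball d n → x ∈ P d n := by
  intro n
  induction n with
  | zero =>
    intro x hx
    rw [mem_ball] at hx
    have hzero : ∀ j, |x j| = 0 := by
      have h0 : ∑ j, |x j| = 0 :=
        le_antisymm (by exact_mod_cast hx.1) (Finset.sum_nonneg fun j _ => abs_nonneg _)
      intro j
      exact (Finset.sum_eq_zero_iff_of_nonneg fun j _ => abs_nonneg (x j)).1 h0 j (mem_univ j)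
    have hx0 : x = 0 := funext fun j => abs_eq_zero.1 (hzero j)
    exact ⟨Fin.elim0, fun i => i.elim0, by simp [hx0]⟩
  | succ n ih =>
    intro x hx
    rw [mem_ball] at hx
    obtain ⟨h1, h2⟩ := hx
    by_cases hx0 : x = 0
    · subst hx0
      simp only [Pi.zero_apply, abs_zero, Finset.sum_const_zero, add_zero] at h1 h2
      have hn1 : 1 ≤ n := by omega
      set j0 : Fin d := ⟨0, hd⟩
      have hy : Pi.single j0 (1:ℤ) ∈ ball d n := by
        rw [mem_ball]
        constructor
        · calc ∑ j', |Pi.single j0 (1:ℤ) j'| = 1 := by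
                simp [Pi.single_apply, apply_ite abs, Finset.sum_ite_eq']
            _ ≤ (n:ℤ) := by exact_mod_cast hn1
        · have : ∑ j', Pi.single j0 (1:ℤ) j' = 1 := by
            simp [Pi.single_apply, Finset.sum_ite_eq']
          rw [this]
          omega
      have hyP := ih _ hy
      have := step_mem hyP j0 (-1) (Or.inr rfl)
      have heq : Pi.single j0 (1:ℤ) + Pi.single j0 (-1:ℤ) = (0 : Fin d → ℤ) := by
        rw [← Pi.single_add]
        norm_num
      rwa [heq] at this
    · obtain ⟨j, hj⟩ := Function.ne_iff.1 hx0
      simp only [Pi.zero_apply] at hj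
      set s : ℤ := if 0 < x j then 1 else -1 with hs
      set y : Fin d → ℤ := x - Pi.single j s with hy
      have hyj : y j = x j - s := by simp [hy]
      have hyk : ∀ k, k ≠ j → y k = x k := by
        intro k hk
        simp [hy, Pi.single_eq_of_ne hk]
      -- sums split at j
      have hxsplit : ∑ k, |x k| = |x j| + ∑ k ∈ Finset.univ.erase j, |x k| :=
        (Finset.add_sum_erase _ _ (mem_univ j)).symm
      have hysplit : ∑ k, |y k| = |y j| + ∑ k ∈ Finset.univ.erase j, |y k| :=
        (Finset.add_sum_erase _ _ (mem_univ j)).symm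
      have herase : ∑ k ∈ Finset.univ.erase j, |y k| = ∑ k ∈ Finset.univ.erase j, |x k| :=
        Finset.sum_congr rfl fun k hk => by rw [hyk k (Finset.mem_erase.1 hk).1]
      have hxsplit2 : ∑ k, x k = x j + ∑ k ∈ Finset.univ.erase j, x k :=
        (Finset.add_sum_erase _ _ (mem_univ j)).symm
      have hysplit2 : ∑ k, y k = y j + ∑ k ∈ Finset.univ.erase j, y k :=
        (Finset.add_sum_erase _ _ (mem_univ j)).symm
      have herase2 : ∑ k ∈ Finset.univ.erase j, y k = ∑ k ∈ Finset.univ.erase j, x k :=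
        Finset.sum_congr rfl fun k hk => by rw [hyk k (Finset.mem_erase.1 hk).1]
      have hyb : y ∈ ball d n := by
        rw [mem_ball]
        have habs : |y j| = |x j| - 1 := by
          rcases lt_trichotomy (x j) 0 with h | h | h
          · rw [hyj, hs, if_neg (by omega), abs_of_neg h, abs_of_nonpos (by omega)]
            ring
          · exact absurd h hj
          · rw [hyj, hs, if_pos h, abs_of_pos h, abs_of_nonneg (by omega)]
        constructor
        · rw [hysplit, herase, habs]
          rw [hxsplit] at h1
          push_cast at h1 ⊢
          omega
        · rw [hysplit2, herase2, hyj]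
          rw [hxsplit2] at h2
          have : s = 1 ∨ s = -1 := by rw [hs]; split_ifs <;> simp
          push_cast at h2 ⊢
          rcases this with h | h <;> rw [h] <;> omega
      have hyP := ih _ hyb
      have := step_mem hyP j s (by rw [hs]; split_ifs <;> simp)
      have heq : y + Pi.single j s = x := by rw [hy]; ring
      rwa [heq] at this

theorem stmt_4 (n : ℕ) :
    (Nat.card (P 4 n) : ℚ) =
      (1 / 3) * n ^ 4 + (4 / 3) * n ^ 3 + (8 / 3) * n ^ 2 + (8 / 3) * n + 1 := by
  have hset : P 4 n = ↑(ball 4 n) := by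
    ext x
    exact ⟨fun h => P_subset_ball h, fun h => ball_subset_P (by norm_num) n x h⟩
  have hcard : Nat.card (P 4 n) = N 4 n := by
    rw [hset, Nat.card_coe_set_eq, Set.ncard_coe_finset]
    rfl
  have h3 := N4 n
  rw [hcard]
  have h3' : (3:ℚ) * (N 4 n : ℚ) = (n:ℚ)^4 + 4*(n:ℚ)^3 + 8*(n:ℚ)^2 + 8*(n:ℚ) + 3 := by
    exact_mod_cast congrArg (Nat.cast (R := ℚ)) h3
  linarith
end

section
/- For all d ≥ 1 and n ≥ 0, the number of possible positions of an n-step simple random walk on Z^d equals |P_n^d| = ∑_{k=0}^{d-1} C(d-1, k) · C(d+n-k, d). -/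
open Finset

lemma P_succ {d n : ℕ} {y x : Fin d → ℤ} (hy : y ∈ P d n) (j : Fin d) (c : ℤ)
    (hx : x = y + Pi.single j c) (hc : c = 1 ∨ c = -1) : x ∈ P d (n + 1) := by
  obtain ⟨f, hf, rfl⟩ := hy
  refine ⟨Fin.cons (Pi.single j c) f, ?_, ?_⟩
  · intro i
    refine Fin.cases ?_ ?_ i
    · exact ⟨j, by rcases hc with h | h <;> simp [h]⟩
    · intro i'; simpa using hf i'
  · rw [Fin.sum_cons, hx]; ring

lemma P_sub {d n : ℕ} {x : Fin d → ℤ} (hx : x ∈ P d n) :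
    (∑ i, (x i).natAbs) ≤ n ∧ (∑ i, (x i).natAbs) % 2 = n % 2 := by
  induction n generalizing x with
  | zero =>
    obtain ⟨f, hf, rfl⟩ := hx
    simp
  | succ n ih =>
    obtain ⟨f, hf, rfl⟩ := hx
    rw [Fin.sum_univ_succ]
    set y := ∑ i : Fin n, f i.succ with hy
    have hyP : y ∈ P d n := ⟨fun i => f i.succ, fun i => hf i.succ, rfl⟩
    obtain ⟨hle, hpar⟩ := ih hyP
    obtain ⟨j, hj⟩ := hf 0
    have key : ∀ c : ℤ, c = 1 ∨ c = -1 →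
        (∑ i, (((Pi.single j c : Fin d → ℤ) + y) i).natAbs) ≤ (∑ i, (y i).natAbs) + 1 ∧
        (∑ i, (((Pi.single j c : Fin d → ℤ) + y) i).natAbs) % 2 = ((∑ i, (y i).natAbs) + 1) % 2 := by
      intro c hc
      have h1 : ∑ i, (((Pi.single j c : Fin d → ℤ) + y) i).natAbs
          = ∑ i ∈ Finset.univ.erase j, (y i).natAbs + (((Pi.single j c : Fin d → ℤ) + y) j).natAbs := by
        rw [← Finset.sum_erase_add _ _ (Finset.mem_univ j)]
        congr 1
        refine Finset.sum_congr rfl ?_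
        intro i hi
        have : i ≠ j := (Finset.mem_erase.mp hi).1
        simp [Pi.single_eq_of_ne this]
      have h2 : ∑ i, (y i).natAbs
          = ∑ i ∈ Finset.univ.erase j, (y i).natAbs + (y j).natAbs := by
        rw [← Finset.sum_erase_add _ _ (Finset.mem_univ j)]
      have h3 : (((Pi.single j c : Fin d → ℤ) + y) j) = c + y j := by simp
      rw [h1, h2, h3]
      rcases hc with h | h <;> subst h <;> constructor <;> omega
    rcases hj with h | h <;> rw [h] <;>
    · first
      | (obtain ⟨k1, k2⟩ := key 1 (Or.inl rfl); constructor <;> omega)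
      | (obtain ⟨k1, k2⟩ := key (-1) (Or.inr rfl); constructor <;> omega)

lemma single_wt {d : ℕ} (j : Fin d) (c : ℤ) :
    (∑ i, ((Pi.single j c : Fin d → ℤ) i).natAbs) = c.natAbs := by
  rw [Finset.sum_eq_single_of_mem j (Finset.mem_univ j)]
  · simp
  · intro i _ hi; simp [Pi.single_eq_of_ne hi]

lemma P_sup {d : ℕ} (hd : 1 ≤ d) : ∀ (n : ℕ) (x : Fin d → ℤ),
    (∑ i, (x i).natAbs) ≤ n → (∑ i, (x i).natAbs) % 2 = n % 2 → x ∈ P d n := by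
  intro n
  induction n with
  | zero =>
    intro x h1 _
    have : x = 0 := by
      funext i
      have h3 : (x i).natAbs ≤ ∑ i, (x i).natAbs :=
        Finset.single_le_sum (f := fun k => (x k).natAbs) (fun k _ => Nat.zero_le _) (Finset.mem_univ i)
      simp only [Pi.zero_apply]
      omega
    exact ⟨fun i => i.elim0, fun i => i.elim0, by simp [this]⟩
  | succ n ih =>
    intro x h1 h2
    by_cases h : ∃ j, x j ≠ 0
    · obtain ⟨j, hj⟩ := h
      obtain ⟨c, hcor, hcx⟩ : ∃ c : ℤ, (c = 1 ∨ c = -1) ∧ (x j - c).natAbs + 1 = (x j).natAbs := by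
        rcases lt_or_gt_of_ne hj with hneg | hpos
        · exact ⟨-1, Or.inr rfl, by omega⟩
        · exact ⟨1, Or.inl rfl, by omega⟩
      set y : Fin d → ℤ := x - Pi.single j c with hy
      have hterm : ∀ i, (y i).natAbs = (x i).natAbs - (if i = j then 1 else 0) := by
        intro i
        by_cases hij : i = j
        · subst hij
          have : y i = x i - c := by simp [hy]
          rw [this]
          simp
          omega
        · have : y i = x i := by simp [hy, Pi.single_eq_of_ne hij]
          simp [this, hij]
      have hsum : ∑ i, (y i).natAbs + 1 = ∑ i, (x i).natAbs := by
        have hxj : 1 ≤ (x j).natAbs := by omega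
        have e1 : ∑ i, (y i).natAbs
            = ∑ i ∈ Finset.univ.erase j, (x i).natAbs + ((x j).natAbs - 1) := by
          rw [← Finset.sum_erase_add _ _ (Finset.mem_univ j)]
          congr 1
          · refine Finset.sum_congr rfl fun i hi => ?_
            rw [hterm i, if_neg (Finset.mem_erase.mp hi).1]
            omega
          · rw [hterm j, if_pos rfl]
        have e2 : ∑ i, (x i).natAbs
            = ∑ i ∈ Finset.univ.erase j, (x i).natAbs + (x j).natAbs := by
          rw [← Finset.sum_erase_add _ _ (Finset.mem_univ j)]
        omega
      have hyP : y ∈ P d n := ih y (by omega) (by omega)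
      exact P_succ hyP j c (by simp [hy]) hcor
    · push_neg at h
      have hx0 : x = 0 := funext fun i => h i
      have h0 : (∑ i, (x i).natAbs) = 0 := by simp [hx0]
      have hn : n % 2 = 1 := by omega
      have hn1 : 1 ≤ n := by omega
      set j : Fin d := ⟨0, hd⟩
      have hyP : (Pi.single j 1 : Fin d → ℤ) ∈ P d n :=
        ih _ (by rw [single_wt]; simpa using hn1) (by rw [single_wt]; simp [hn])
      refine P_succ hyP j (-1) ?_ (Or.inr rfl)
      funext i
      by_cases hij : i = j
      · subst hij; simp [hx0]
      · simp [hx0, Pi.single_eq_of_ne hij]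

noncomputable def W (d n : ℕ) : Finset (Fin d → ℤ) :=
  (Fintype.piFinset fun _ : Fin d => Finset.Icc (-(n:ℤ)) (n:ℤ)).filter
    fun x => (∑ i, (x i).natAbs) ≤ n ∧ (∑ i, (x i).natAbs) % 2 = n % 2

lemma mem_W {d n : ℕ} {x : Fin d → ℤ} :
    x ∈ W d n ↔ (∑ i, (x i).natAbs) ≤ n ∧ (∑ i, (x i).natAbs) % 2 = n % 2 := by
  rw [W, Finset.mem_filter]
  constructor
  · exact fun h => h.2
  · intro h
    refine ⟨?_, h⟩
    rw [Fintype.mem_piFinset]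
    intro i
    have h3 : (x i).natAbs ≤ ∑ k, (x k).natAbs :=
      Finset.single_le_sum (f := fun k => (x k).natAbs) (fun k _ => Nat.zero_le _)
        (Finset.mem_univ i)
    rw [Finset.mem_Icc]
    omega

lemma W_card_succ (d n : ℕ) :
    (W (d+1) n).card = ∑ j ∈ Finset.Icc (-(n:ℤ)) (n:ℤ), (W d (n - j.natAbs)).card := by
  have hW : W (d+1) n = (Finset.Icc (-(n:ℤ)) (n:ℤ)).biUnion
      fun j => (W d (n - j.natAbs)).image (Fin.cons j) := by
    ext x
    rw [mem_W, Finset.mem_biUnion]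
    constructor
    · intro ⟨h1, h2⟩
      have hs : ∑ i, (x i).natAbs = (x 0).natAbs + ∑ i : Fin d, (x i.succ).natAbs :=
        Fin.sum_univ_succ _
      refine ⟨x 0, ?_, ?_⟩
      · rw [Finset.mem_Icc]; omega
      · rw [Finset.mem_image]
        refine ⟨Fin.tail x, ?_, Fin.cons_self_tail x⟩
        rw [mem_W]
        have ht : ∑ i : Fin d, ((Fin.tail x) i).natAbs = ∑ i : Fin d, (x i.succ).natAbs := rfl
        rw [ht]
        constructor
        · omega
        · omega
    · rintro ⟨j, hj, hx⟩
      rw [Finset.mem_image] at hx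
      obtain ⟨y, hy, rfl⟩ := hx
      rw [mem_W] at hy
      rw [Finset.mem_Icc] at hj
      have hjn : j.natAbs ≤ n := by omega
      have hs : ∑ i, ((Fin.cons j y : Fin (d+1) → ℤ) i).natAbs
          = j.natAbs + ∑ i, (y i).natAbs := by
        rw [Fin.sum_univ_succ]
        simp
      rw [hs]
      omega
  rw [hW, Finset.card_biUnion]
  · refine Finset.sum_congr rfl fun j _ => ?_
    exact Finset.card_image_of_injective _ (Fin.cons_right_injective (α := fun _ : Fin (d+1) => ℤ) j)
  · intro j1 _ j2 _ hne
    rw [Function.onFun, Finset.disjoint_left]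
    intro a ha hb
    rw [Finset.mem_image] at ha hb
    obtain ⟨y1, _, h1⟩ := ha
    obtain ⟨y2, _, h2⟩ := hb
    apply hne
    have := (congrFun h1 0).trans (congrFun h2 0).symm
    simpa using this

lemma sum_Icc_natAbs (n : ℕ) (g : ℕ → ℕ) :
    ∑ j ∈ Finset.Icc (-(n:ℤ)) (n:ℤ), g j.natAbs = g 0 + 2 * ∑ m ∈ Finset.Icc 1 n, g m := by
  induction n with
  | zero => simp
  | succ n ih =>
    have e1 : Finset.Icc (-((n:ℤ)+1)) ((n:ℤ)+1)
        = insert (-((n:ℤ)+1)) (insert ((n:ℤ)+1) (Finset.Icc (-(n:ℤ)) (n:ℤ))) := by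
      ext a
      simp only [Finset.mem_Icc, Finset.mem_insert]
      omega
    have e2 : Finset.Icc 1 (n+1) = insert (n+1) (Finset.Icc 1 n) := by
      ext a
      simp only [Finset.mem_Icc, Finset.mem_insert]
      omega
    push_cast
    rw [e1, Finset.sum_insert (by simp only [Finset.mem_insert, Finset.mem_Icc]; omega),
      Finset.sum_insert (by simp only [Finset.mem_Icc]; omega), e2,
      Finset.sum_insert (by simp only [Finset.mem_Icc]; omega), ih]
    have h1 : ((-((n:ℤ)+1)).natAbs) = n+1 := by omega
    have h2 : (((n:ℤ)+1).natAbs) = n+1 := by omega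
    rw [h1, h2]
    ring

lemma W_one (n : ℕ) : (W 1 n).card = n + 1 := by
  have : W 1 n = (Finset.range (n+1)).image (fun m : ℕ => fun _ : Fin 1 => (2*(m:ℤ) - (n:ℤ))) := by
    ext x
    rw [mem_W, Finset.mem_image]
    have hx : ∑ i, (x i).natAbs = (x 0).natAbs := by
      rw [Fin.sum_univ_one]
    rw [hx]
    constructor
    · intro ⟨h1, h2⟩
      refine ⟨((x 0 + n).toNat / 2), ?_, ?_⟩
      · rw [Finset.mem_range]; omega
      · funext i
        have : i = 0 := Subsingleton.elim _ _
        subst this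
        omega
    · rintro ⟨m, hm, rfl⟩
      rw [Finset.mem_range] at hm
      simp only
      constructor <;> omega
  rw [this, Finset.card_image_of_injOn, Finset.card_range]
  intro a _ b _ hab
  have := congrFun hab 0
  simp only at this
  omega

def R (d n : ℕ) : ℕ := ∑ k ∈ Finset.range d, (d - 1).choose k * (d + n - k).choose d

lemma hockey (r a : ℕ) (h : a ≤ r) (n : ℕ) :
    ∑ m ∈ Finset.range n, (a + m).choose r = (a + n).choose (r + 1) := by
  induction n with
  | zero => simp [Nat.choose_eq_zero_of_lt (by omega : a < r + 1)]
  | succ n ih =>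
    rw [Finset.sum_range_succ, ih, show a + (n+1) = (a + n) + 1 from rfl,
      Nat.choose_succ_succ (a + n) r, Nat.add_comm]

lemma keyR (d n : ℕ) (hd : 1 ≤ d) :
    R (d + 1) n = R d n + 2 * ∑ m ∈ Finset.range n, R d m := by
  have hrhs : R d n + 2 * ∑ m ∈ Finset.range n, R d m
      = ∑ k ∈ Finset.range d, (d-1).choose k * ((d + n - k).choose d + 2 * (d + n - k).choose (d+1)) := by
    rw [R]
    have hsw : ∑ m ∈ Finset.range n, R d m
        = ∑ k ∈ Finset.range d, (d-1).choose k * (d + n - k).choose (d+1) := by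
      simp only [R]
      rw [Finset.sum_comm]
      refine Finset.sum_congr rfl fun k hk => ?_
      rw [Finset.mem_range] at hk
      rw [← Finset.mul_sum]
      congr 1
      have : ∀ m, d + m - k = (d - k) + m := fun m => by omega
      calc ∑ m ∈ Finset.range n, (d + m - k).choose d
          = ∑ m ∈ Finset.range n, ((d - k) + m).choose d :=
            Finset.sum_congr rfl fun m _ => by rw [this m]
        _ = ((d - k) + n).choose (d+1) := hockey d (d-k) (by omega) n
        _ = (d + n - k).choose (d+1) := by congr 1; omega
    rw [hsw, Finset.mul_sum, ← Finset.sum_add_distrib]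
    refine Finset.sum_congr rfl fun k _ => ?_
    ring
  rw [hrhs, R]
  have e1 : ∑ k ∈ Finset.range (d+1), d.choose k * (d + 1 + n - k).choose (d+1)
      = ∑ k ∈ Finset.range d, d.choose (k+1) * (d + 1 + n - (k+1)).choose (d+1)
        + d.choose 0 * (d + 1 + n - 0).choose (d+1) := Finset.sum_range_succ' _ d
  rw [show d + 1 - 1 = d from rfl] at *
  rw [e1]
  have e2 : ∀ k ∈ Finset.range d, d.choose (k+1) * (d + 1 + n - (k+1)).choose (d+1)
      = (d-1).choose k * (d + n - k).choose (d+1)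
        + (d-1).choose (k+1) * (d + 1 + n - (k+1)).choose (d+1) := by
    intro k hk
    have hch : d.choose (k+1) = (d-1).choose k + (d-1).choose (k+1) := by
      obtain ⟨e, rfl⟩ : ∃ e, d = e + 1 := ⟨d - 1, by omega⟩
      simp [Nat.choose_succ_succ]
    rw [hch, show d + 1 + n - (k+1) = d + n - k from by omega]
    ring
  rw [Finset.sum_congr rfl e2, Finset.sum_add_distrib]
  -- now: Σ (d-1)k * C(d+n-k,d+1) + Σ (d-1)(k+1) * C(d+n-k? ...) + C(d+1+n, d+1)
  have e3 : ∑ k ∈ Finset.range d, (d-1).choose (k+1) * (d + 1 + n - (k+1)).choose (d+1)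
        + d.choose 0 * (d + 1 + n - 0).choose (d+1)
      = ∑ k ∈ Finset.range d, (d-1).choose k * (d + 1 + n - k).choose (d+1) := by
    have := Finset.sum_range_succ' (fun k => (d-1).choose k * (d + 1 + n - k).choose (d+1)) d
    rw [Finset.sum_range_succ] at this
    simp only [Nat.choose_self, Nat.choose_zero_right, one_mul, Nat.sub_zero] at this ⊢
    rw [Nat.choose_eq_zero_of_lt (by omega : d - 1 < d)] at this
    simp at this
    omega
  rw [add_assoc, e3, ← Finset.sum_add_distrib]
  refine Finset.sum_congr rfl fun k hk => ?_
  rw [Finset.mem_range] at hk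
  have pas : (d + 1 + n - k).choose (d+1) = (d + n - k).choose d + (d + n - k).choose (d+1) := by
    rw [show d + 1 + n - k = (d + n - k) + 1 from by omega, Nat.choose_succ_succ]
  rw [pas]
  ring


lemma mem_P_iff {d n : ℕ} (hd : 1 ≤ d) {x : Fin d → ℤ} :
    x ∈ P d n ↔ (∑ i, (x i).natAbs) ≤ n ∧ (∑ i, (x i).natAbs) % 2 = n % 2 :=
  ⟨P_sub, fun h => P_sup hd n x h.1 h.2⟩

lemma sum_reflect (n : ℕ) (g : ℕ → ℕ) :
    ∑ m ∈ Finset.Icc 1 n, g (n - m) = ∑ m ∈ Finset.range n, g m := by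
  refine Finset.sum_nbij' (i := fun m => n - m) (j := fun m => n - m) ?_ ?_ ?_ ?_ ?_
  · intro m hm
    rw [Finset.mem_Icc] at hm
    rw [Finset.mem_range]
    omega
  · intro m hm
    rw [Finset.mem_range] at hm
    rw [Finset.mem_Icc]
    omega
  · intro m hm
    rw [Finset.mem_Icc] at hm
    omega
  · intro m hm
    rw [Finset.mem_range] at hm
    omega
  · intro m _
    rfl

lemma W_card_eq_R (d : ℕ) (hd : 1 ≤ d) : ∀ n, (W d n).card = R d n := by
  induction d, hd using Nat.le_induction with
  | base =>
    intro n
    rw [W_one, R]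
    simp [Nat.choose_one_right]
    omega
  | succ d hd ih =>
    intro n
    rw [W_card_succ, sum_Icc_natAbs n (fun m => (W d (n - m)).card),
      sum_reflect n (fun m => (W d m).card), Nat.sub_zero, ih n, keyR d n hd]
    congr 1
    rw [Finset.mul_sum, Finset.mul_sum]
    exact Finset.sum_congr rfl fun m _ => by rw [ih m]

theorem stmt_5 (d n : ℕ) (hd : 1 ≤ d) :
    Nat.card (P d n) =
      ∑ k ∈ Finset.range d, (d - 1).choose k * (d + n - k).choose d := by
  have hset : P d n = ↑(W d n) := by
    ext x
    rw [Finset.mem_coe]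
    exact (mem_P_iff hd).trans mem_W.symm
  rw [hset, Nat.card_coe_set_eq, Set.ncard_coe_finset]
  exact W_card_eq_R d hd n
end
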